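/- arXiv:2307.16836 — 4 statements merged into one kernel-verified Lean document; each statement's English description precedes it below -/
import Mathlib

section
/- Let s and l be non-negative integers and let k = 2s + 6l. Then there exists a partition of the set {1, 2, ..., k} into pairwise disjoint subsets Q_1, Q_2, ..., Q_{s+2l} whose union is {1, ..., k}, such that: for each i with 1 ≤ i ≤ l, |Q_i| = 3 and the elements of Q_i sum to k+1; for each i with l+1 ≤ i ≤ s+l, |Q_i| = 2 and the elements of Q_i sum to k+1; and for each i with s+l+1 ≤ i ≤ s+2l, |Q_i| = 3 and the elements of Q_i sum to 2(k+1). -/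
lemma three_card_sum (a b c : ℕ) (h1 : a ≠ b) (h2 : a ≠ c) (h3 : b ≠ c) :
    ({a, b, c} : Finset ℕ).card = 3 ∧ ∑ x ∈ ({a, b, c} : Finset ℕ), x = a + b + c := by
  have hna : a ∉ ({b, c} : Finset ℕ) := by simp [h1, h2]
  have hnb : b ∉ ({c} : Finset ℕ) := by simp [h3]
  constructor
  · rw [Finset.card_insert_of_notMem hna, Finset.card_insert_of_notMem hnb,
      Finset.card_singleton]
  · rw [Finset.sum_insert hna, Finset.sum_insert hnb, Finset.sum_singleton]; omega

lemma two_card_sum (a b : ℕ) (h1 : a ≠ b) :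
    ({a, b} : Finset ℕ).card = 2 ∧ ∑ x ∈ ({a, b} : Finset ℕ), x = a + b :=
  ⟨Finset.card_pair h1, Finset.sum_pair h1⟩



/-- **Lemma 1 (Kaplan–Lev–Roditty zero-sum partition).**
Let `s, l` be non-negative integers and `k = 2s + 6l`. Then `{1, …, k}` can be
partitioned into pairwise disjoint subsets `Q 0, …, Q (s + 2l - 1)` (indexed here by
`Fin (s + 2*l)`, so the first `l` indices play the role of `i ∈ [1, l]`, the next `s`
indices the role of `i ∈ [l+1, s+l]`, and the last `l` indices the role of
`i ∈ [s+l+1, s+2l]`) such that: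
* each of the first `l` sets has 3 elements summing to `k + 1`;
* each of the next `s` sets has 2 elements summing to `k + 1`;
* each of the last `l` sets has 3 elements summing to `2 * (k + 1)`. -/
theorem zero_sum_partition (s l k : ℕ) (hk : k = 2 * s + 6 * l) :
    ∃ Q : Fin (s + 2 * l) → Finset ℕ,
      (∀ i j : Fin (s + 2 * l), i ≠ j → Disjoint (Q i) (Q j)) ∧
      (Finset.univ.biUnion Q = Finset.Icc 1 k) ∧
      (∀ i : Fin (s + 2 * l), (i : ℕ) < l →
        (Q i).card = 3 ∧ (∑ a ∈ Q i, a) = k + 1) ∧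
      (∀ i : Fin (s + 2 * l), l ≤ (i : ℕ) → (i : ℕ) < s + l →
        (Q i).card = 2 ∧ (∑ a ∈ Q i, a) = k + 1) ∧
      (∀ i : Fin (s + 2 * l), s + l ≤ (i : ℕ) →
        (Q i).card = 3 ∧ (∑ a ∈ Q i, a) = 2 * (k + 1)) := by
  set Q : Fin (s + 2 * l) → Finset ℕ := fun i =>
    if (i : ℕ) < l then
      ({(i : ℕ) + 1, l + (i : ℕ) + 1, k - l - 2 * (i : ℕ) - 1} : Finset ℕ)
    else if (i : ℕ) < s + l then
      ({2 * l + (i : ℕ) + 1, k - 2 * l - (i : ℕ)} : Finset ℕ)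
    else
      ({2 * l + 1 + ((i : ℕ) - s - l), k + 1 - l + ((i : ℕ) - s - l),
        k - l - 2 * ((i : ℕ) - s - l)} : Finset ℕ) with hQ
  have hA : ∀ i : Fin (s + 2 * l), (i : ℕ) < l →
      (Q i).card = 3 ∧ (∑ a ∈ Q i, a) = k + 1 := by
    intro i hi
    have hi2 := i.isLt
    simp only [hQ, if_pos hi]
    obtain ⟨hc, hs⟩ := three_card_sum ((i : ℕ) + 1) (l + (i : ℕ) + 1)
      (k - l - 2 * (i : ℕ) - 1) (by omega) (by omega) (by omega)
    exact ⟨hc, by omega⟩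
  have hB : ∀ i : Fin (s + 2 * l), l ≤ (i : ℕ) → (i : ℕ) < s + l →
      (Q i).card = 2 ∧ (∑ a ∈ Q i, a) = k + 1 := by
    intro i hi hi'
    simp only [hQ, if_neg (by omega : ¬ (i : ℕ) < l), if_pos hi']
    obtain ⟨hc, hs⟩ := two_card_sum (2 * l + (i : ℕ) + 1) (k - 2 * l - (i : ℕ)) (by omega)
    exact ⟨hc, by omega⟩
  have hC : ∀ i : Fin (s + 2 * l), s + l ≤ (i : ℕ) →
      (Q i).card = 3 ∧ (∑ a ∈ Q i, a) = 2 * (k + 1) := by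
    intro i hi
    have hi2 := i.isLt
    simp only [hQ, if_neg (by omega : ¬ (i : ℕ) < l), if_neg (by omega : ¬ (i : ℕ) < s + l)]
    obtain ⟨hc, hs⟩ := three_card_sum (2 * l + 1 + ((i : ℕ) - s - l))
      (k + 1 - l + ((i : ℕ) - s - l)) (k - l - 2 * ((i : ℕ) - s - l))
      (by omega) (by omega) (by omega)
    exact ⟨hc, by omega⟩
  have hdis : ∀ i j : Fin (s + 2 * l), i ≠ j → Disjoint (Q i) (Q j) := by
    intro i j hne
    have hij : (i : ℕ) ≠ (j : ℕ) := fun h => hne (Fin.ext h)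
    have hi2 := i.isLt
    have hj2 := j.isLt
    rw [Finset.disjoint_left]
    intro x hx hx'
    simp only [hQ] at hx hx'
    split_ifs at hx hx' <;>
      simp only [Finset.mem_insert, Finset.mem_singleton] at hx hx' <;> omega
  have hsub : Finset.univ.biUnion Q ⊆ Finset.Icc 1 k := by
    intro x hx
    simp only [Finset.mem_biUnion] at hx
    obtain ⟨i, -, hx⟩ := hx
    have hi2 := i.isLt
    simp only [hQ] at hx
    rw [Finset.mem_Icc]
    split_ifs at hx <;>
      simp only [Finset.mem_insert, Finset.mem_singleton] at hx <;> omega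
  have hcard : (Finset.univ.biUnion Q).card = k := by
    rw [Finset.card_biUnion (fun i _ j _ h => hdis i j h)]
    have hf : ∀ i : Fin (s + 2 * l), (Q i).card =
        (fun m : ℕ => if m < l then 3 else if m < s + l then 2 else 3) (i : ℕ) := by
      intro i
      by_cases h1 : (i : ℕ) < l
      · simpa only [if_pos h1] using (hA i h1).1
      · by_cases h2 : (i : ℕ) < s + l
        · simpa only [if_neg h1, if_pos h2] using (hB i (by omega) h2).1
        · simpa only [if_neg h1, if_neg h2] using (hC i (by omega)).1
    rw [Finset.sum_congr rfl fun i _ => hf i, Fin.sum_univ_eq_sum_range (fun m : ℕ => if m < l then 3 else if m < s + l then 2 else 3) (s + 2 * l)]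
    have hval : ∀ i ∈ Finset.range (s + 2 * l),
        (if i < l then 3 else if i < s + l then 2 else 3) =
          2 + (if i < l then 1 else 0) + (if s + l ≤ i then 1 else 0) := by
      intro i _
      split_ifs <;> omega
    rw [Finset.sum_congr rfl hval]
    rw [Finset.sum_add_distrib, Finset.sum_add_distrib, Finset.sum_const]
    rw [← Finset.card_filter, ← Finset.card_filter]
    have e1 : (Finset.range (s + 2 * l)).filter (fun i => i < l) = Finset.range l := by
      ext x; simp only [Finset.mem_filter, Finset.mem_range]; omega
    have e2 : (Finset.range (s + 2 * l)).filter (fun i => s + l ≤ i) =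
        Finset.Ico (s + l) (s + 2 * l) := by
      ext x; simp only [Finset.mem_filter, Finset.mem_range, Finset.mem_Ico]; omega
    rw [e1, e2]
    simp only [Finset.sum_const, Finset.card_range, Nat.card_Ico, smul_eq_mul, Finset.card_range]
    omega
  have hunion : Finset.univ.biUnion Q = Finset.Icc 1 k := by
    apply Finset.eq_of_subset_of_card_le hsub
    rw [hcard, Nat.card_Icc]
    omega
  exact ⟨Q, hdis, hunion, hA, hB, hC⟩
end

section
/- Let s and l be non-negative integers and let k = 2s + 6l. Define, for 1 ≤ i ≤ l, the sets A_i = {i, l+s+i, k-(l+s+2i)+1} and C_i = {k-i+1, s+3l+1-i, k-(s+3l+1-2i)+1}; and for 1 ≤ i ≤ s, the sets B_i = {l+i, k-l-i+1}. Then these s+2l sets are pairwise disjoint, their union is {1, 2, ..., k}, each A_i has exactly 3 elements summing to k+1, each B_i has exactly 2 elements summing to k+1, and each C_i has exactly 3 elements summing to 2(k+1). -/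
/-- **Explicit form of the zero-sum partition.**
Let `s, l` be non-negative integers, `k = 2s + 6l`, and for `1 ≤ i ≤ l` define
`A i = {i, l+s+i, k-(l+s+2i)+1}` and `C i = {k-i+1, s+3l+1-i, k-(s+3l+1-2i)+1}`,
and for `1 ≤ i ≤ s` define `B i = {l+i, k-l-i+1}`. Then these `s + 2l` sets are
pairwise disjoint, their union is `{1, …, k}`, each `A i` has exactly 3 elements
summing to `k+1`, each `B i` has exactly 2 elements summing to `k+1`, and each
`C i` has exactly 3 elements summing to `2(k+1)`. -/
theorem zero_sum_partition_explicit (s l k : ℕ) (hk : k = 2 * s + 6 * l)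
    (A B C : ℕ → Finset ℕ)
    (hA : ∀ i, A i = {i, l + s + i, k - (l + s + 2 * i) + 1})
    (hB : ∀ i, B i = {l + i, k - l - i + 1})
    (hC : ∀ i, C i = {k - i + 1, s + 3 * l + 1 - i, k - (s + 3 * l + 1 - 2 * i) + 1}) :
    (∀ i ∈ Finset.Icc 1 l, ∀ j ∈ Finset.Icc 1 l, i ≠ j → Disjoint (A i) (A j)) ∧
    (∀ i ∈ Finset.Icc 1 s, ∀ j ∈ Finset.Icc 1 s, i ≠ j → Disjoint (B i) (B j)) ∧
    (∀ i ∈ Finset.Icc 1 l, ∀ j ∈ Finset.Icc 1 l, i ≠ j → Disjoint (C i) (C j)) ∧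
    (∀ i ∈ Finset.Icc 1 l, ∀ j ∈ Finset.Icc 1 s, Disjoint (A i) (B j)) ∧
    (∀ i ∈ Finset.Icc 1 l, ∀ j ∈ Finset.Icc 1 l, Disjoint (A i) (C j)) ∧
    (∀ i ∈ Finset.Icc 1 s, ∀ j ∈ Finset.Icc 1 l, Disjoint (B i) (C j)) ∧
    ((Finset.Icc 1 l).biUnion A ∪ (Finset.Icc 1 s).biUnion B ∪
      (Finset.Icc 1 l).biUnion C = Finset.Icc 1 k) ∧
    (∀ i ∈ Finset.Icc 1 l, (A i).card = 3 ∧ (∑ a ∈ A i, a) = k + 1) ∧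
    (∀ i ∈ Finset.Icc 1 s, (B i).card = 2 ∧ (∑ a ∈ B i, a) = k + 1) ∧
    (∀ i ∈ Finset.Icc 1 l, (C i).card = 3 ∧ (∑ a ∈ C i, a) = 2 * (k + 1)) := by

  subst hk
  have disj : ∀ (X Y : Finset ℕ), (∀ x, x ∈ X → x ∈ Y → False) → Disjoint X Y := by
    intro X Y h
    rw [Finset.disjoint_left]
    exact fun {x} hx hx' => (h x hx hx').elim
  refine ⟨?_, ?_, ?_, ?_, ?_, ?_, ?_, ?_, ?_, ?_⟩
  · intro i hi j hj hij
    simp only [Finset.mem_Icc] at hi hj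
    refine disj _ _ (fun x hx hx' => ?_)
    rw [hA i] at hx; rw [hA j] at hx'
    simp only [Finset.mem_insert, Finset.mem_singleton] at hx hx'
    omega
  · intro i hi j hj hij
    simp only [Finset.mem_Icc] at hi hj
    refine disj _ _ (fun x hx hx' => ?_)
    rw [hB i] at hx; rw [hB j] at hx'
    simp only [Finset.mem_insert, Finset.mem_singleton] at hx hx'
    omega
  · intro i hi j hj hij
    simp only [Finset.mem_Icc] at hi hj
    refine disj _ _ (fun x hx hx' => ?_)
    rw [hC i] at hx; rw [hC j] at hx'
    simp only [Finset.mem_insert, Finset.mem_singleton] at hx hx'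
    omega
  · intro i hi j hj
    simp only [Finset.mem_Icc] at hi hj
    refine disj _ _ (fun x hx hx' => ?_)
    rw [hA i] at hx; rw [hB j] at hx'
    simp only [Finset.mem_insert, Finset.mem_singleton] at hx hx'
    omega
  · intro i hi j hj
    simp only [Finset.mem_Icc] at hi hj
    refine disj _ _ (fun x hx hx' => ?_)
    rw [hA i] at hx; rw [hC j] at hx'
    simp only [Finset.mem_insert, Finset.mem_singleton] at hx hx'
    omega
  · intro i hi j hj
    simp only [Finset.mem_Icc] at hi hj
    refine disj _ _ (fun x hx hx' => ?_)
    rw [hB i] at hx; rw [hC j] at hx'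
    simp only [Finset.mem_insert, Finset.mem_singleton] at hx hx'
    omega
  · ext x
    simp only [Finset.mem_union, Finset.mem_biUnion, Finset.mem_Icc, hA, hB, hC,
      Finset.mem_insert, Finset.mem_singleton]
    constructor
    · rintro ((⟨i, hi, h⟩ | ⟨i, hi, h⟩) | ⟨i, hi, h⟩) <;> omega
    · intro hx
      by_cases h1 : x ≤ l
      · exact Or.inl (Or.inl ⟨x, by omega, by omega⟩)
      by_cases h2 : x ≤ l + s
      · exact Or.inl (Or.inr ⟨x - l, by omega, by omega⟩)
      by_cases h3 : x ≤ s + 2 * l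
      · exact Or.inl (Or.inl ⟨x - l - s, by omega, by omega⟩)
      by_cases h4 : x ≤ s + 3 * l
      · exact Or.inr ⟨s + 3 * l + 1 - x, by omega, by omega⟩
      by_cases h5 : x ≤ s + 5 * l
      · by_cases hpar : (x - s - 3 * l) % 2 = 0
        · exact Or.inr ⟨(x - s - 3 * l) / 2, by omega, by omega⟩
        · exact Or.inl (Or.inl ⟨(s + 5 * l + 1 - x) / 2, by omega, by omega⟩)
      by_cases h6 : x ≤ 2 * s + 5 * l
      · exact Or.inl (Or.inr ⟨2 * s + 5 * l + 1 - x, by omega, by omega⟩)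
      · exact Or.inr ⟨2 * s + 6 * l + 1 - x, by omega, by omega⟩
  · intro i hi
    simp only [Finset.mem_Icc] at hi
    rw [hA i]
    have h1 : i ∉ ({l + s + i, 2 * s + 6 * l - (l + s + 2 * i) + 1} : Finset ℕ) := by
      simp only [Finset.mem_insert, Finset.mem_singleton]; omega
    have h2 : l + s + i ∉ ({2 * s + 6 * l - (l + s + 2 * i) + 1} : Finset ℕ) := by
      simp only [Finset.mem_singleton]; omega
    refine ⟨?_, ?_⟩
    · rw [Finset.card_insert_of_notMem h1, Finset.card_insert_of_notMem h2,
        Finset.card_singleton]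
    · rw [Finset.sum_insert h1, Finset.sum_insert h2, Finset.sum_singleton]
      omega
  · intro i hi
    simp only [Finset.mem_Icc] at hi
    rw [hB i]
    have h1 : l + i ∉ ({2 * s + 6 * l - l - i + 1} : Finset ℕ) := by
      simp only [Finset.mem_singleton]; omega
    refine ⟨?_, ?_⟩
    · rw [Finset.card_insert_of_notMem h1, Finset.card_singleton]
    · rw [Finset.sum_insert h1, Finset.sum_singleton]
      omega
  · intro i hi
    simp only [Finset.mem_Icc] at hi
    rw [hC i]
    have h1 : 2 * s + 6 * l - i + 1 ∉ ({s + 3 * l + 1 - i,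
        2 * s + 6 * l - (s + 3 * l + 1 - 2 * i) + 1} : Finset ℕ) := by
      simp only [Finset.mem_insert, Finset.mem_singleton]; omega
    have h2 : s + 3 * l + 1 - i ∉
        ({2 * s + 6 * l - (s + 3 * l + 1 - 2 * i) + 1} : Finset ℕ) := by
      simp only [Finset.mem_singleton]; omega
    refine ⟨?_, ?_⟩
    · rw [Finset.card_insert_of_notMem h1, Finset.card_insert_of_notMem h2,
        Finset.card_singleton]
    · rw [Finset.sum_insert h1, Finset.sum_insert h2, Finset.sum_singleton]
      omega
end

section
/- Let T be a finite tree with m ≥ 1 edges and let w be a vertex of T. For each vertex v ≠ w, let e^v denote the unique edge incident to v that lies on the (unique) path in T from v to w. Suppose f is a bijection from the edge set of T onto {1, 2, ..., m} such that φ_f(v) ≡ f(e^v) (mod m+1) for every vertex v ≠ w, and φ_f(w) ≡ 0 (mod m+1). Then f is an antimagic labeling of T, i.e., the vertex-sums φ_f(u) are pairwise distinct over all vertices u of T. -/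
/-- The vertex-sum of a vertex `u` under an edge labeling `f`:
the sum of the labels of the edges incident to `u`. -/
def vertexSum {V : Type*} [Fintype V] [DecidableEq V] (G : SimpleGraph V)
    [DecidableRel G.Adj] (f : Sym2 V → ℕ) (u : V) : ℕ :=
  ∑ e ∈ G.incidenceFinset u, f e

/-- A graph `G` with `m` edges is antimagic if there is a bijection from its edge
set onto `{1, …, m}` whose vertex-sums are pairwise distinct over all vertices. -/
def IsAntimagic {V : Type*} [Fintype V] [DecidableEq V] (G : SimpleGraph V)
    [DecidableRel G.Adj] : Prop :=
  ∃ f : Sym2 V → ℕ,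
    Set.BijOn f ↑G.edgeFinset ↑(Finset.Icc 1 G.edgeFinset.card) ∧
    Function.Injective (vertexSum G f)

/-- **Zero-sum labelings are antimagic.** Let `T` be a finite tree with `m ≥ 1`
edges, rooted at a vertex `w`. For each vertex `v ≠ w`, let `ePath v` be the unique
edge incident to `v` lying on the unique path from `v` to `w`. If `f` is a bijection
from the edge set onto `{1, …, m}` such that `φ_f(v) ≡ f(ePath v) (mod m + 1)` for
all `v ≠ w` and `φ_f(w) ≡ 0 (mod m + 1)`, then the vertex-sums of `f` are pairwise
distinct, i.e. `f` is an antimagic labeling of `T`. -/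
theorem zero_sum_labeling_antimagic {V : Type*} [Fintype V] [DecidableEq V]
    (G : SimpleGraph V) [DecidableRel G.Adj] (hT : G.IsTree)
    (m : ℕ) (hm : m = G.edgeFinset.card) (hm1 : 1 ≤ m)
    (w : V) (ePath : V → Sym2 V)
    (hePath : ∀ v : V, v ≠ w → ∀ p : G.Path v w, ePath v ∈ p.val.edges ∧ v ∈ ePath v)
    (f : Sym2 V → ℕ) (hf : Set.BijOn f ↑G.edgeFinset ↑(Finset.Icc 1 m))
    (hsum : ∀ v : V, v ≠ w → vertexSum G f v % (m + 1) = f (ePath v) % (m + 1))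
    (hw : vertexSum G f w % (m + 1) = 0) :
    Function.Injective (vertexSum G f) := by
  have hconn : G.Connected := hT.isConnected
  -- every v ≠ w has a path to w
  have getPath : ∀ v : V, G.Path v w := fun v => ((hconn.preconnected v w).some).toPath
  -- ePath v is an edge of G
  have hedge : ∀ v : V, v ≠ w → ePath v ∈ G.edgeFinset := by
    intro v hv
    obtain ⟨h1, _⟩ := hePath v hv (getPath v)
    exact SimpleGraph.mem_edgeFinset.2 ((getPath v).val.edges_subset_edgeSet h1)
  have hval : ∀ v : V, v ≠ w → f (ePath v) ∈ Finset.Icc 1 m := by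
    intro v hv
    exact hf.mapsTo (by simpa using hedge v hv)
  have hmod : ∀ v : V, v ≠ w → vertexSum G f v % (m + 1) = f (ePath v) := by
    intro v hv
    rw [hsum v hv, Nat.mod_eq_of_lt]
    exact Nat.lt_succ_of_le (Finset.mem_Icc.1 (hval v hv)).2
  intro a b hab
  by_contra hne
  -- neither a nor b can be w unless both are
  have hnw : ∀ x y : V, x ≠ w → y = w → vertexSum G f x = vertexSum G f y → False := by
    intro x y hx hy hxy
    have h0 : vertexSum G f x % (m + 1) = 0 := by rw [hxy, hy, hw]
    rw [hmod x hx] at h0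
    have := (Finset.mem_Icc.1 (hval x hx)).1
    omega
  rcases eq_or_ne a w with ha | ha
  · rcases eq_or_ne b w with hb | hb
    · exact hne (ha.trans hb.symm)
    · exact hnw b a hb ha hab.symm
  rcases eq_or_ne b w with hb | hb
  · exact hnw a b ha hb hab
  -- both differ from w
  have hfe : f (ePath a) = f (ePath b) := by
    rw [← hmod a ha, ← hmod b hb, hab]
  have he : ePath a = ePath b :=
    hf.injOn (by simpa using hedge a ha) (by simpa using hedge b hb) hfe
  -- the common edge is s(a, b)
  obtain ⟨hpa, hva⟩ := hePath a ha (getPath a)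
  obtain ⟨hpb, hvb⟩ := hePath b hb (getPath b)
  have hab2 : a ∈ ePath a ∧ b ∈ ePath a := ⟨hva, he ▸ hvb⟩
  have heab : ePath a = s(a, b) := ((Sym2.mem_and_mem_iff hne).1 hab2)
  -- decompose the path from a to w
  have hpath : (getPath a).val.IsPath := (getPath a).prop
  cases hp : (getPath a).val with
  | nil => exact ha rfl
  | cons h q =>
    rw [hp] at hpa hpath
    rw [SimpleGraph.Walk.cons_isPath_iff] at hpath
    rw [SimpleGraph.Walk.edges_cons, List.mem_cons] at hpa
    rcases hpa with h1 | h1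
    · -- first edge: so q starts at b
      rw [heab] at h1
      have hbc : b = _ := Sym2.congr_right.mp h1
      subst hbc
      -- q is a path from b to w avoiding a; apply hePath b to it
      obtain ⟨h2, _⟩ := hePath b hb ⟨q, hpath.1⟩
      rw [← he, heab] at h2
      exact hpath.2 (q.fst_mem_support_of_mem_edges h2)
    · rw [heab] at h1
      exact hpath.2 (q.fst_mem_support_of_mem_edges h1)
end

section
/- Let k be an even positive integer and let k = r_1 + r_2 + ... + r_t where r_i ≥ 2 for every i with 1 ≤ i ≤ t. Then the set {1, 2, ..., k} can be partitioned into pairwise disjoint subsets D_1, D_2, ..., D_t whose union is {1, ..., k}, such that for every i with 1 ≤ i ≤ t, |D_i| = r_i and the sum of the elements of D_i is congruent to 0 modulo k+1. -/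
namespace ZSP


def skA (m d : ℕ) : ℕ :=
  if d = 1 then m
  else if d % 2 = 0 then 6*m - d/2
  else if d = 4*m - 1 then 2*m+1
  else if d = 2*m - 1 then 2*m
  else if 2*m+1 ≤ d then (4*m-1-d)/2
  else m + (2*m+1-d)/2

def skB (m d : ℕ) : ℕ :=
  if d = 1 then m+1
  else if d % 2 = 0 then 6*m+2 - d/2
  else if d = 4*m+1 then 2*m+1
  else if d = 2*m+1 then m
  else if d = 2*m - 1 then 2*m+2
  else if 2*m+3 ≤ d then (4*m+1-d)/2
  else m+2 + (2*m-1-d)/2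

def skC (m d : ℕ) : ℕ :=
  if d = 1 then 7*m+3
  else if d = 4*m+2 then 4*m+3
  else if d % 2 = 0 then 2*m+1 - d/2
  else if d = 4*m+1 then 2*m+1
  else if d = 2*m+1 then 4*m+2
  else if 2*m+3 ≤ d then 4*m+3 + (4*m+1-d)/2
  else 5*m+2 + (2*m+1-d)/2

def skD (m d : ℕ) : ℕ :=
  if d = 1 then 7*m+4
  else if d = 4*m+3 then 4*m+4
  else if d % 2 = 0 then 2*m+2 - d/2
  else if d = 4*m+1 then 2*m+2
  else if d = 2*m+1 then 6*m+4
  else if 2*m+3 ≤ d then 4*m+4 + (4*m+1-d)/2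
  else 5*m+3 + (2*m+1-d)/2

def skS (n d : ℕ) : ℕ :=
  if n = 1 then 1
  else if n = 2 then (if d = 1 then 1 else 3)
  else if n = 3 then (if d = 1 then 1 else if d = 2 then 3 else 4)
  else (if d = 1 then 2 else if d = 2 then 6 else if d = 3 then 7
        else if d = 4 then 1 else 4)

def sk (n d : ℕ) : ℕ :=
  if n = 1 ∨ n = 2 ∨ n = 3 ∨ n = 5 then skS n d
  else if n % 4 = 0 then skA (n/4) d
  else if n % 4 = 1 then skB (n/4) d
  else if n % 4 = 2 then skC (n/4) d
  else skD (n/4) d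

-- per-family lemmas
lemma skA_pos (m d : ℕ) (hm : 1 ≤ m) (h1 : 1 ≤ d) (h2 : d ≤ 4*m) : 1 ≤ skA m d := by
  unfold skA; split_ifs <;> omega

lemma skB_pos (m d : ℕ) (hm : 2 ≤ m) (h1 : 1 ≤ d) (h2 : d ≤ 4*m+1) : 1 ≤ skB m d := by
  unfold skB; split_ifs <;> omega

lemma skC_pos (m d : ℕ) (hm : 1 ≤ m) (h1 : 1 ≤ d) (h2 : d ≤ 4*m+2) : 1 ≤ skC m d := by
  unfold skC; split_ifs <;> omega

lemma skD_pos (m d : ℕ) (hm : 1 ≤ m) (h1 : 1 ≤ d) (h2 : d ≤ 4*m+3) : 1 ≤ skD m d := by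
  unfold skD; split_ifs <;> omega

lemma skA_ub (m d : ℕ) (hm : 1 ≤ m) (h1 : 1 ≤ d) (h2 : d ≤ 4*m) : skA m d + d ≤ 8*m := by
  unfold skA; split_ifs <;> omega

lemma skB_ub (m d : ℕ) (hm : 2 ≤ m) (h1 : 1 ≤ d) (h2 : d ≤ 4*m+1) : skB m d + d ≤ 8*m+2 := by
  unfold skB; split_ifs <;> omega

lemma skC_ub (m d : ℕ) (hm : 1 ≤ m) (h1 : 1 ≤ d) (h2 : d ≤ 4*m+2) :
    skC m d + d ≤ 8*m+5 ∧ skC m d ≠ 8*m+4 ∧ skC m d + d ≠ 8*m+4 := by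
  unfold skC; split_ifs <;> omega

lemma skD_ub (m d : ℕ) (hm : 1 ≤ m) (h1 : 1 ≤ d) (h2 : d ≤ 4*m+3) :
    skD m d + d ≤ 8*m+7 ∧ skD m d ≠ 8*m+6 ∧ skD m d + d ≠ 8*m+6 := by
  unfold skD; split_ifs <;> omega

set_option maxHeartbeats 2000000 in
lemma skA_inj (m d d' : ℕ) (hm : 1 ≤ m) (h1 : 1 ≤ d) (h2 : d ≤ 4*m)
    (h1' : 1 ≤ d') (h2' : d' ≤ 4*m) (hne : d ≠ d') :
    skA m d ≠ skA m d' ∧ skA m d ≠ skA m d' + d' ∧ skA m d + d ≠ skA m d' + d' := by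
  unfold skA; split_ifs <;> omega

set_option maxHeartbeats 2000000 in
lemma skB_inj (m d d' : ℕ) (hm : 2 ≤ m) (h1 : 1 ≤ d) (h2 : d ≤ 4*m+1)
    (h1' : 1 ≤ d') (h2' : d' ≤ 4*m+1) (hne : d ≠ d') :
    skB m d ≠ skB m d' ∧ skB m d ≠ skB m d' + d' ∧ skB m d + d ≠ skB m d' + d' := by
  unfold skB; split_ifs <;> omega

set_option maxHeartbeats 2000000 in
lemma skC_inj (m d d' : ℕ) (hm : 1 ≤ m) (h1 : 1 ≤ d) (h2 : d ≤ 4*m+2)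
    (h1' : 1 ≤ d') (h2' : d' ≤ 4*m+2) (hne : d ≠ d') :
    skC m d ≠ skC m d' ∧ skC m d ≠ skC m d' + d' ∧ skC m d + d ≠ skC m d' + d' := by
  unfold skC; split_ifs <;> omega

set_option maxHeartbeats 2000000 in
lemma skD_inj (m d d' : ℕ) (hm : 1 ≤ m) (h1 : 1 ≤ d) (h2 : d ≤ 4*m+3)
    (h1' : 1 ≤ d') (h2' : d' ≤ 4*m+3) (hne : d ≠ d') :
    skD m d ≠ skD m d' ∧ skD m d ≠ skD m d' + d' ∧ skD m d + d ≠ skD m d' + d' := by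
  unfold skD; split_ifs <;> omega

set_option maxHeartbeats 1000000

lemma sk_pos (n d : ℕ) (h1 : 1 ≤ d) (h2 : d ≤ n) : 1 ≤ sk n d := by
  unfold sk
  by_cases hs : n = 1 ∨ n = 2 ∨ n = 3 ∨ n = 5
  · rw [if_pos hs]
    rcases hs with h|h|h|h <;> subst h <;> interval_cases d <;> simp [skS]
  · rw [if_neg hs]
    have hd4 := Nat.div_add_mod n 4
    split_ifs with g0 g1 g2
    · exact skA_pos _ _ (by omega) h1 (by omega)
    · exact skB_pos _ _ (by omega) h1 (by omega)
    · exact skC_pos _ _ (by omega) h1 (by omega)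
    · exact skD_pos _ _ (by omega) h1 (by omega)

lemma sk_ub (n d : ℕ) (h1 : 1 ≤ d) (h2 : d ≤ n) : sk n d + d ≤ 2*n+1 := by
  unfold sk
  by_cases hs : n = 1 ∨ n = 2 ∨ n = 3 ∨ n = 5
  · rw [if_pos hs]
    rcases hs with h|h|h|h <;> subst h <;> interval_cases d <;> simp [skS]
  · rw [if_neg hs]
    have hd4 := Nat.div_add_mod n 4
    split_ifs with g0 g1 g2
    · have := skA_ub (n/4) d (by omega) h1 (by omega); omega
    · have := skB_ub (n/4) d (by omega) h1 (by omega); omega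
    · have := (skC_ub (n/4) d (by omega) h1 (by omega)).1; omega
    · have := (skD_ub (n/4) d (by omega) h1 (by omega)).1; omega

lemma sk_hook (n d d' : ℕ) (h1 : 1 ≤ d) (h2 : d ≤ n) (h1' : 1 ≤ d') (h2' : d' ≤ n)
    (hh : sk n d + d = 2*n+1) : sk n d' ≠ 2*n ∧ sk n d' + d' ≠ 2*n := by
  unfold sk at hh ⊢
  by_cases hs : n = 1 ∨ n = 2 ∨ n = 3 ∨ n = 5
  · rw [if_pos hs] at hh ⊢
    rcases hs with h|h|h|h <;> subst h <;> interval_cases d <;> interval_cases d' <;>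
      simp_all [skS]
  · rw [if_neg hs] at hh ⊢
    have hd4 := Nat.div_add_mod n 4
    split_ifs at hh ⊢ with g0 g1 g2
    · have := skA_ub (n/4) d (by omega) h1 (by omega); omega
    · have := skB_ub (n/4) d (by omega) h1 (by omega); omega
    · have := (skC_ub (n/4) d' (by omega) h1' (by omega)); omega
    · have := (skD_ub (n/4) d' (by omega) h1' (by omega)); omega

lemma sk_inj (n d d' : ℕ) (h1 : 1 ≤ d) (h2 : d ≤ n) (h1' : 1 ≤ d') (h2' : d' ≤ n)
    (hne : d ≠ d') :
    sk n d ≠ sk n d' ∧ sk n d ≠ sk n d' + d' ∧ sk n d + d ≠ sk n d' + d' := by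
  unfold sk
  by_cases hs : n = 1 ∨ n = 2 ∨ n = 3 ∨ n = 5
  · rw [if_pos hs]
    rcases hs with h|h|h|h <;> subst h <;> interval_cases d <;> interval_cases d' <;>
      simp_all [skS]
  · rw [if_neg hs]
    have hd4 := Nat.div_add_mod n 4
    split_ifs with g0 g1 g2
    · exact skA_inj _ _ _ (by omega) h1 (by omega) h1' (by omega) hne
    · exact skB_inj _ _ _ (by omega) h1 (by omega) h1' (by omega) hne
    · exact skC_inj _ _ _ (by omega) h1 (by omega) h1' (by omega) hne
    · exact skD_inj _ _ _ (by omega) h1 (by omega) h1' (by omega) hne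

end ZSP

namespace ZSP
open Finset

def Pr (k j : ℕ) : Finset ℕ := {j, k+1-j}
def iot (k s x : ℕ) : ℕ := if x ≤ s then x else k+1-x
noncomputable def ii3 (n s d : ℕ) : ℕ := if n + sk n d + d ≤ s then n + sk n d + d else s
noncomputable def trip (n s d : ℕ) : Finset ℕ := {d, n + sk n d, ii3 n s d}
noncomputable def Uset (n s : ℕ) : Finset ℕ := (Finset.Icc 1 n).biUnion (trip n s)
noncomputable def B1 (k n d : ℕ) : Finset ℕ := {d, n + sk n d, k+1-(n + sk n d + d)}
noncomputable def B2 (k n d : ℕ) : Finset ℕ := {k+1-d, k+1-(n + sk n d), n + sk n d + d}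
noncomputable def Blk (k n ρ : ℕ) : Finset ℕ :=
  if ρ < n then B1 k n (ρ+1) else B2 k n (ρ+1-n)

section PairLemmas
variable {k s x j j' : ℕ}

lemma iot_mem (hk2 : k = 2*s) (hx : x ∈ Icc 1 k) : iot k s x ∈ Icc 1 s := by
  subst hk2; simp only [mem_Icc] at *; unfold iot; split_ifs <;> omega

lemma mem_Pr_iot (hx : x ∈ Icc 1 k) : x ∈ Pr k (iot k s x) := by
  simp only [mem_Icc] at hx; unfold iot Pr
  split_ifs <;> simp <;> omega

lemma iot_eq_of_mem_Pr (hk2 : k = 2*s) (hj : j ∈ Icc 1 s) (hx : x ∈ Pr k j) :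
    iot k s x = j := by
  subst hk2; simp only [mem_Icc] at hj; unfold Pr at hx; simp at hx; unfold iot
  rcases hx with rfl | rfl <;> split_ifs <;> omega

lemma Pr_sub (hk2 : k = 2*s) (hj : j ∈ Icc 1 s) : Pr k j ⊆ Icc 1 k := by
  subst hk2; simp only [mem_Icc] at hj; unfold Pr
  intro x hx; simp at hx; simp only [mem_Icc]; rcases hx with rfl | rfl <;> omega

lemma Pr_card (hk2 : k = 2*s) (hj : j ∈ Icc 1 s) : (Pr k j).card = 2 := by
  subst hk2; simp only [mem_Icc] at hj; unfold Pr
  rw [card_insert_of_notMem (by simp; omega), card_singleton]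

lemma Pr_sum (hk2 : k = 2*s) (hj : j ∈ Icc 1 s) : ∑ a ∈ Pr k j, a = k+1 := by
  subst hk2; simp only [mem_Icc] at hj; unfold Pr
  rw [sum_insert (by simp; omega), sum_singleton]; omega

lemma Pr_disj (hk2 : k = 2*s) (hj : j ∈ Icc 1 s) (hj' : j' ∈ Icc 1 s) (hne : j ≠ j') :
    Disjoint (Pr k j) (Pr k j') := by
  subst hk2; simp only [mem_Icc] at hj hj'
  simp only [Pr, disjoint_insert_right, disjoint_singleton_right, mem_insert,
    mem_singleton, not_or]
  omega

end PairLemmas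

section TripLemmas
variable {k s n d d' x ρ ρ' : ℕ}

lemma trip_sub (h3n : 3*n ≤ s) (hd1 : 1 ≤ d) (hd2 : d ≤ n) : trip n s d ⊆ Icc 1 s := by
  have P := sk_pos n d hd1 hd2
  have U := sk_ub n d hd1 hd2
  intro y hy; simp only [trip, mem_insert, mem_singleton] at hy
  simp only [mem_Icc]
  unfold ii3 at hy; split_ifs at hy <;> rcases hy with rfl|rfl|rfl <;> omega

lemma trip_card (h3n : 3*n ≤ s) (hd1 : 1 ≤ d) (hd2 : d ≤ n) : (trip n s d).card = 3 := by
  have P := sk_pos n d hd1 hd2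
  have U := sk_ub n d hd1 hd2
  have key : d ≠ n + sk n d ∧ d ≠ ii3 n s d ∧ n + sk n d ≠ ii3 n s d := by
    unfold ii3; split_ifs with h
    · omega
    · have hh : sk n d + d = 2*n+1 := by omega
      have H := sk_hook n d d hd1 hd2 hd1 hd2 hh
      omega
  rw [trip, card_insert_of_notMem (by simp [key.1, key.2.1]),
    card_insert_of_notMem (by simp [key.2.2]), card_singleton]

lemma trip_disj (h3n : 3*n ≤ s) (hd1 : 1 ≤ d) (hd2 : d ≤ n)
    (hd1' : 1 ≤ d') (hd2' : d' ≤ n) (hne : d ≠ d') :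
    Disjoint (trip n s d) (trip n s d') := by
  have P := sk_pos n d hd1 hd2
  have U := sk_ub n d hd1 hd2
  have P' := sk_pos n d' hd1' hd2'
  have U' := sk_ub n d' hd1' hd2'
  have I := sk_inj n d d' hd1 hd2 hd1' hd2' hne
  have I' := sk_inj n d' d hd1' hd2' hd1 hd2 (Ne.symm hne)
  simp only [trip, disjoint_insert_right, disjoint_singleton_right,
    disjoint_insert_left, disjoint_singleton_left, mem_insert, mem_singleton, not_or]
  unfold ii3; split_ifs with h h'
  · omega
  · have hh : sk n d' + d' = 2*n+1 := by omega
    have H := sk_hook n d' d hd1' hd2' hd1 hd2 hh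
    omega
  · have hh : sk n d + d = 2*n+1 := by omega
    have H := sk_hook n d d' hd1 hd2 hd1' hd2' hh
    omega
  · omega

lemma Uset_sub (h3n : 3*n ≤ s) : Uset n s ⊆ Icc 1 s := by
  intro y hy; simp only [Uset, mem_biUnion, mem_Icc] at hy
  obtain ⟨d, hd, hyd⟩ := hy
  exact trip_sub h3n hd.1 hd.2 hyd

lemma Uset_card (h3n : 3*n ≤ s) : (Uset n s).card = 3*n := by
  rw [Uset, card_biUnion]
  · rw [Finset.sum_congr rfl (fun d hd => trip_card h3n (mem_Icc.mp hd).1 (mem_Icc.mp hd).2)]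
    simp [Nat.card_Icc, mul_comm]
  · intro a ha b hb hab
    exact trip_disj h3n (mem_Icc.mp ha).1 (mem_Icc.mp ha).2 (mem_Icc.mp hb).1
      (mem_Icc.mp hb).2 hab

lemma B1_facts (hk2 : k = 2*s) (h3n : 3*n ≤ s) (hd1 : 1 ≤ d) (hd2 : d ≤ n) :
    (B1 k n d).card = 3 ∧ (∑ a ∈ B1 k n d, a) = k+1 ∧ B1 k n d ⊆ Icc 1 k := by
  subst hk2
  have P := sk_pos n d hd1 hd2
  have U := sk_ub n d hd1 hd2
  have key : d ≠ n + sk n d ∧ d ≠ 2*s+1-(n + sk n d + d) ∧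
      n + sk n d ≠ 2*s+1-(n + sk n d + d) := by
    by_cases h : n + sk n d + d ≤ s
    · omega
    · have hh : sk n d + d = 2*n+1 := by omega
      have H := sk_hook n d d hd1 hd2 hd1 hd2 hh
      omega
  refine ⟨?_, ?_, ?_⟩
  · rw [B1, card_insert_of_notMem (by simp [key.1, key.2.1]),
      card_insert_of_notMem (by simp [key.2.2]), card_singleton]
  · rw [B1, sum_insert (by simp [key.1, key.2.1]), sum_insert (by simp [key.2.2]),
      sum_singleton]
    omega
  · intro y hy; simp only [B1, mem_insert, mem_singleton] at hy
    simp only [mem_Icc]; rcases hy with rfl|rfl|rfl <;> omega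

lemma B2_facts (hk2 : k = 2*s) (h3n : 3*n ≤ s) (hd1 : 1 ≤ d) (hd2 : d ≤ n) :
    (B2 k n d).card = 3 ∧ (∑ a ∈ B2 k n d, a) = 2*(k+1) ∧ B2 k n d ⊆ Icc 1 k := by
  subst hk2
  have P := sk_pos n d hd1 hd2
  have U := sk_ub n d hd1 hd2
  have key : 2*s+1-d ≠ 2*s+1-(n + sk n d) ∧ 2*s+1-d ≠ n + sk n d + d ∧
      2*s+1-(n + sk n d) ≠ n + sk n d + d := by
    by_cases h : n + sk n d + d ≤ s
    · omega
    · have hh : sk n d + d = 2*n+1 := by omega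
      have H := sk_hook n d d hd1 hd2 hd1 hd2 hh
      omega
  refine ⟨?_, ?_, ?_⟩
  · rw [B2, card_insert_of_notMem (by simp [key.1, key.2.1]),
      card_insert_of_notMem (by simp [key.2.2]), card_singleton]
  · rw [B2, sum_insert (by simp [key.1, key.2.1]), sum_insert (by simp [key.2.2]),
      sum_singleton]
    omega
  · intro y hy; simp only [B2, mem_insert, mem_singleton] at hy
    simp only [mem_Icc]; rcases hy with rfl|rfl|rfl <;> omega

lemma B1_iot (hk2 : k = 2*s) (h3n : 3*n ≤ s) (hd1 : 1 ≤ d) (hd2 : d ≤ n)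
    (hx : x ∈ B1 k n d) : iot k s x ∈ trip n s d := by
  subst hk2
  have P := sk_pos n d hd1 hd2
  have U := sk_ub n d hd1 hd2
  simp only [B1, mem_insert, mem_singleton] at hx
  simp only [trip, mem_insert, mem_singleton]
  unfold iot ii3; split_ifs <;> rcases hx with rfl|rfl|rfl <;> omega

lemma B2_iot (hk2 : k = 2*s) (h3n : 3*n ≤ s) (hd1 : 1 ≤ d) (hd2 : d ≤ n)
    (hx : x ∈ B2 k n d) : iot k s x ∈ trip n s d := by
  subst hk2
  have P := sk_pos n d hd1 hd2
  have U := sk_ub n d hd1 hd2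
  simp only [B2, mem_insert, mem_singleton] at hx
  simp only [trip, mem_insert, mem_singleton]
  unfold iot ii3; split_ifs <;> rcases hx with rfl|rfl|rfl <;> omega

lemma mem_B1B2_of (hk2 : k = 2*s) (h3n : 3*n ≤ s) (hd1 : 1 ≤ d) (hd2 : d ≤ n)
    (hx : x ∈ Icc 1 k) (hio : iot k s x ∈ trip n s d) : x ∈ B1 k n d ∪ B2 k n d := by
  subst hk2
  have P := sk_pos n d hd1 hd2
  have U := sk_ub n d hd1 hd2
  have hpr := mem_Pr_iot (s := s) hx
  simp only [mem_Icc] at hx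
  simp only [Pr, mem_insert, mem_singleton] at hpr
  simp only [trip, mem_insert, mem_singleton] at hio
  simp only [mem_union, B1, B2, mem_insert, mem_singleton]
  unfold iot ii3 at * ; split_ifs at * <;> omega

lemma B11_disj (hk2 : k = 2*s) (h3n : 3*n ≤ s) (hd1 : 1 ≤ d) (hd2 : d ≤ n)
    (hd1' : 1 ≤ d') (hd2' : d' ≤ n) (hne : d ≠ d') :
    Disjoint (B1 k n d) (B1 k n d') := by
  subst hk2
  have P := sk_pos n d hd1 hd2
  have U := sk_ub n d hd1 hd2
  have P' := sk_pos n d' hd1' hd2'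
  have U' := sk_ub n d' hd1' hd2'
  have I := sk_inj n d d' hd1 hd2 hd1' hd2' hne
  have I' := sk_inj n d' d hd1' hd2' hd1 hd2 (Ne.symm hne)
  simp only [B1, disjoint_insert_right, disjoint_singleton_right,
    disjoint_insert_left, disjoint_singleton_left, mem_insert, mem_singleton, not_or]
  by_cases h : n + sk n d + d ≤ s
  · by_cases h' : n + sk n d' + d' ≤ s
    · omega
    · have hh : sk n d' + d' = 2*n+1 := by omega
      have H := sk_hook n d' d hd1' hd2' hd1 hd2 hh
      omega
  · have hh : sk n d + d = 2*n+1 := by omega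
    have H := sk_hook n d d' hd1 hd2 hd1' hd2' hh
    omega

lemma B22_disj (hk2 : k = 2*s) (h3n : 3*n ≤ s) (hd1 : 1 ≤ d) (hd2 : d ≤ n)
    (hd1' : 1 ≤ d') (hd2' : d' ≤ n) (hne : d ≠ d') :
    Disjoint (B2 k n d) (B2 k n d') := by
  subst hk2
  have P := sk_pos n d hd1 hd2
  have U := sk_ub n d hd1 hd2
  have P' := sk_pos n d' hd1' hd2'
  have U' := sk_ub n d' hd1' hd2'
  have I := sk_inj n d d' hd1 hd2 hd1' hd2' hne
  have I' := sk_inj n d' d hd1' hd2' hd1 hd2 (Ne.symm hne)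
  simp only [B2, disjoint_insert_right, disjoint_singleton_right,
    disjoint_insert_left, disjoint_singleton_left, mem_insert, mem_singleton, not_or]
  by_cases h : n + sk n d + d ≤ s
  · by_cases h' : n + sk n d' + d' ≤ s
    · omega
    · have hh : sk n d' + d' = 2*n+1 := by omega
      have H := sk_hook n d' d hd1' hd2' hd1 hd2 hh
      omega
  · have hh : sk n d + d = 2*n+1 := by omega
    have H := sk_hook n d d' hd1 hd2 hd1' hd2' hh
    omega

lemma B12_disj (hk2 : k = 2*s) (h3n : 3*n ≤ s) (hd1 : 1 ≤ d) (hd2 : d ≤ n)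
    (hd1' : 1 ≤ d') (hd2' : d' ≤ n) :
    Disjoint (B1 k n d) (B2 k n d') := by
  subst hk2
  have P := sk_pos n d hd1 hd2
  have U := sk_ub n d hd1 hd2
  have P' := sk_pos n d' hd1' hd2'
  have U' := sk_ub n d' hd1' hd2'
  simp only [B1, B2, disjoint_insert_right, disjoint_singleton_right,
    disjoint_insert_left, disjoint_singleton_left, mem_insert, mem_singleton, not_or]
  by_cases hne : d = d'
  · subst hne
    by_cases h : n + sk n d + d ≤ s
    · omega
    · have hh : sk n d + d = 2*n+1 := by omega
      have H := sk_hook n d d hd1 hd2 hd1 hd2 hh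
      omega
  · have I := sk_inj n d d' hd1 hd2 hd1' hd2' hne
    have I' := sk_inj n d' d hd1' hd2' hd1 hd2 (Ne.symm hne)
    by_cases h : n + sk n d + d ≤ s
    · by_cases h' : n + sk n d' + d' ≤ s
      · omega
      · have hh : sk n d' + d' = 2*n+1 := by omega
        have H := sk_hook n d' d hd1' hd2' hd1 hd2 hh
        omega
    · have hh : sk n d + d = 2*n+1 := by omega
      have H := sk_hook n d d' hd1 hd2 hd1' hd2' hh
      omega

lemma Blk_drange (hρ : ρ < 2*n) :
    (ρ < n → 1 ≤ ρ+1 ∧ ρ+1 ≤ n) ∧ (¬(ρ < n) → 1 ≤ ρ+1-n ∧ ρ+1-n ≤ n) := by omega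

lemma Blk_card (hk2 : k = 2*s) (h3n : 3*n ≤ s) (hρ : ρ < 2*n) : (Blk k n ρ).card = 3 := by
  unfold Blk; split_ifs with h
  · exact (B1_facts hk2 h3n (by omega) (by omega)).1
  · exact (B2_facts hk2 h3n (by omega) (by omega)).1

lemma Blk_sum (hk2 : k = 2*s) (h3n : 3*n ≤ s) (hρ : ρ < 2*n) :
    (∑ a ∈ Blk k n ρ, a) % (k+1) = 0 := by
  unfold Blk; split_ifs with h
  · rw [(B1_facts hk2 h3n (by omega) (by omega)).2.1, Nat.mod_self]
  · rw [(B2_facts hk2 h3n (by omega) (by omega)).2.1]; simp [Nat.mul_mod_right]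

lemma Blk_sub (hk2 : k = 2*s) (h3n : 3*n ≤ s) (hρ : ρ < 2*n) : Blk k n ρ ⊆ Icc 1 k := by
  unfold Blk; split_ifs with h
  · exact (B1_facts hk2 h3n (by omega) (by omega)).2.2
  · exact (B2_facts hk2 h3n (by omega) (by omega)).2.2

lemma Blk_iot (hk2 : k = 2*s) (h3n : 3*n ≤ s) (hρ : ρ < 2*n) (hx : x ∈ Blk k n ρ) :
    iot k s x ∈ Uset n s := by
  unfold Blk at hx; split_ifs at hx with h
  · exact mem_biUnion.mpr ⟨ρ+1, mem_Icc.mpr (by omega),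
      B1_iot hk2 h3n (by omega) (by omega) hx⟩
  · exact mem_biUnion.mpr ⟨ρ+1-n, mem_Icc.mpr (by omega),
      B2_iot hk2 h3n (by omega) (by omega) hx⟩

lemma Blk_disj (hk2 : k = 2*s) (h3n : 3*n ≤ s) (hρ : ρ < 2*n) (hρ' : ρ' < 2*n)
    (hne : ρ ≠ ρ') : Disjoint (Blk k n ρ) (Blk k n ρ') := by
  unfold Blk; split_ifs with h h'
  · exact B11_disj hk2 h3n (by omega) (by omega) (by omega) (by omega) (by omega)
  · exact B12_disj hk2 h3n (by omega) (by omega) (by omega) (by omega)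
  · exact (B12_disj hk2 h3n (by omega) (by omega) (by omega) (by omega)).symm
  · exact B22_disj hk2 h3n (by omega) (by omega) (by omega) (by omega) (by omega)

end TripLemmas

section Slices
open Finset
variable {s n t i i' p : ℕ} {r : ℕ → ℕ}

def qt (r : ℕ → ℕ) (i : ℕ) : ℕ := (if r i % 2 = 1 then r i - 3 else r i) / 2
def Qt (r : ℕ → ℕ) (i : ℕ) : ℕ := ∑ j ∈ Finset.Icc 1 (i-1), qt r j
noncomputable def FLst (n s : ℕ) : List ℕ := (Finset.Icc 1 s \ Uset n s).sort (· ≤ ·)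

lemma Qt_succ (hi : 1 ≤ i) : Qt r i + qt r i = ∑ j ∈ Finset.Icc 1 i, qt r j := by
  unfold Qt
  obtain ⟨i, rfl⟩ : ∃ j, i = j + 1 := ⟨i - 1, by omega⟩
  rw [Finset.sum_Icc_succ_top (by omega)]
  simp

lemma Qt_le_of_le (hi : 1 ≤ i) (hii' : i ≤ i') :
    Qt r i + qt r i ≤ ∑ j ∈ Finset.Icc 1 i', qt r j := by
  rw [Qt_succ hi]
  exact Finset.sum_le_sum_of_subset (Finset.Icc_subset_Icc le_rfl hii')

lemma exists_slot (hp : p < ∑ j ∈ Finset.Icc 1 t, qt r j) :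
    ∃ i, 1 ≤ i ∧ i ≤ t ∧ Qt r i ≤ p ∧ p < Qt r i + qt r i := by
  induction t with
  | zero => simp at hp
  | succ t ih =>
    rcases lt_or_ge p (∑ j ∈ Finset.Icc 1 t, qt r j) with h | h
    · obtain ⟨i, h1, h2, h3, h4⟩ := ih h
      exact ⟨i, h1, by omega, h3, h4⟩
    · refine ⟨t+1, by omega, le_rfl, ?_, ?_⟩
      · simpa [Qt] using h
      · rw [Qt_succ (by omega)]; exact hp

lemma FLst_nodup : (FLst n s).Nodup := Finset.sort_nodup _ _

lemma FLst_length (h3n : 3*n ≤ s) : (FLst n s).length = s - 3*n := by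
  rw [FLst, Finset.length_sort, card_sdiff_of_subset (Uset_sub h3n), Uset_card h3n, Nat.card_Icc]
  omega

lemma FLst_mem {a : ℕ} : a ∈ FLst n s ↔ a ∈ Finset.Icc 1 s \ Uset n s := Finset.mem_sort _

end Slices

end ZSP

open ZSP Finset

/-- **Zero-sum partition, even case.**
Let `k` be an even positive integer written as `k = r 1 + r 2 + ⋯ + r t` with every
`r i ≥ 2`. Then `{1, …, k}` can be partitioned into pairwise disjoint subsets
`D 1, …, D t` with `|D i| = r i` whose element sums are all `≡ 0 (mod k + 1)`. -/
theorem zero_sum_partition_sizes_even (k t : ℕ) (hk : 0 < k) (hke : Even k)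
    (r : ℕ → ℕ) (hr : ∀ i ∈ Finset.Icc 1 t, 2 ≤ r i)
    (hsum : k = ∑ i ∈ Finset.Icc 1 t, r i) :
    ∃ D : ℕ → Finset ℕ,
      (∀ i ∈ Finset.Icc 1 t, ∀ j ∈ Finset.Icc 1 t, i ≠ j → Disjoint (D i) (D j)) ∧
      ((Finset.Icc 1 t).biUnion D = Finset.Icc 1 k) ∧
      (∀ i ∈ Finset.Icc 1 t, (D i).card = r i ∧ (∑ a ∈ D i, a) % (k + 1) = 0) := by
  classical
  obtain ⟨s, hs⟩ := hke
  have hk2 : k = 2*s := by omega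
  set O : Finset ℕ := (Finset.Icc 1 t).filter (fun i => r i % 2 = 1) with hO
  set n : ℕ := O.card / 2 with hn
  -- arithmetic bookkeeping
  have hrq : ∀ i ∈ Finset.Icc 1 t, r i = 2 * qt r i + (if r i % 2 = 1 then 3 else 0) := by
    intro i hi; have := hr i hi; unfold qt; split_ifs <;> omega
  have hsum2 : k = 2 * (∑ i ∈ Finset.Icc 1 t, qt r i) + 3 * O.card := by
    rw [hsum, Finset.sum_congr rfl hrq, Finset.sum_add_distrib, ← Finset.mul_sum]
    congr 1
    rw [hO, ← Finset.sum_filter]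
    rw [Finset.sum_const, smul_eq_mul, mul_comm]
  have hOcard : O.card = 2 * n := by omega
  have h3n : 3*n ≤ s := by omega
  have hQsum : (∑ i ∈ Finset.Icc 1 t, qt r i) = s - 3*n := by omega
  -- the sorted list of odd parts and of free pair indices
  set oL : List ℕ := O.sort (· ≤ ·) with hoL
  have hoLlen : oL.length = 2*n := by rw [hoL, Finset.length_sort, hOcard]
  have hoLnd : oL.Nodup := Finset.sort_nodup _ _
  set L : List ℕ := FLst n s with hL
  have hLlen : L.length = ∑ i ∈ Finset.Icc 1 t, qt r i := by
    rw [hL, FLst_length h3n, hQsum]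
  have hLnd : L.Nodup := FLst_nodup
  -- slices of free indices
  set Sl : ℕ → Finset ℕ :=
    fun i => (Finset.range (qt r i)).image (fun p => L.getD (Qt r i + p) 0) with hSl
  have hposlt : ∀ i, 1 ≤ i → i ≤ t → ∀ p < qt r i, Qt r i + p < L.length := by
    intro i h1 h2 p hp
    have := Qt_le_of_le (r := r) h1 h2
    omega
  have hSlmem : ∀ i, 1 ≤ i → i ≤ t → ∀ j ∈ Sl i, j ∈ Finset.Icc 1 s \ Uset n s := by
    intro i h1 h2 j hj
    rw [hSl] at hj
    simp only [Finset.mem_image, Finset.mem_range] at hj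
    obtain ⟨p, hp, rfl⟩ := hj
    have hlt := hposlt i h1 h2 p hp
    rw [List.getD_eq_getElem _ _ hlt]
    exact FLst_mem.mp (List.getElem_mem hlt)
  have hSlcard : ∀ i, 1 ≤ i → i ≤ t → (Sl i).card = qt r i := by
    intro i h1 h2
    rw [hSl]
    rw [Finset.card_image_of_injOn, Finset.card_range]
    intro p hp p' hp' he
    simp only [Finset.mem_coe, Finset.mem_range] at hp hp'
    have l1 := hposlt i h1 h2 p hp
    have l2 := hposlt i h1 h2 p' hp'
    have he : L.getD (Qt r i + p) 0 = L.getD (Qt r i + p') 0 := he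
    rw [List.getD_eq_getElem _ _ l1, List.getD_eq_getElem _ _ l2] at he
    have := (hLnd.getElem_inj_iff).mp he
    omega
  have hSldisj : ∀ i i', 1 ≤ i → i ≤ t → 1 ≤ i' → i' ≤ t → i ≠ i' →
      Disjoint (Sl i) (Sl i') := by
    have core : ∀ i i', 1 ≤ i → i ≤ t → 1 ≤ i' → i' ≤ t → i < i' →
        Disjoint (Sl i) (Sl i') := by
      intro i i' h1 h2 h1' h2' hlt
      rw [Finset.disjoint_left]
      intro a ha ha'
      rw [hSl] at ha ha'
      simp only [Finset.mem_image, Finset.mem_range] at ha ha'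
      obtain ⟨p, hp, he⟩ := ha
      obtain ⟨p', hp', he'⟩ := ha'
      have l1 := hposlt i h1 h2 p hp
      have l2 := hposlt i' h1' h2' p' hp'
      rw [List.getD_eq_getElem _ _ l1] at he
      rw [List.getD_eq_getElem _ _ l2] at he'
      have hQ : Qt r i + qt r i ≤ Qt r i' := by
        show Qt r i + qt r i ≤ ∑ j ∈ Finset.Icc 1 (i'-1), qt r j
        exact Qt_le_of_le h1 (by omega : i ≤ i'-1)
      have : Qt r i + p ≠ Qt r i' + p' := by omega
      exact this ((hLnd.getElem_inj_iff).mp (by rw [he, he']))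
    intro i i' h1 h2 h1' h2' hne
    rcases lt_or_gt_of_ne hne with h | h
    · exact core i i' h1 h2 h1' h2' h
    · exact (core i' i h1' h2' h1 h2 h).symm
  -- the partition
  set D : ℕ → Finset ℕ := fun i =>
    (Sl i).biUnion (Pr k) ∪
      (if r i % 2 = 1 then Blk k n (oL.idxOf i) else ∅) with hD
  -- membership in oL
  have hmemoL : ∀ i, i ∈ oL ↔ (i ∈ Finset.Icc 1 t ∧ r i % 2 = 1) := by
    intro i
    rw [hoL, Finset.mem_sort, hO, Finset.mem_filter]
  have hrhoO : ∀ i, r i % 2 = 1 → i ∈ Finset.Icc 1 t → oL.idxOf i < 2*n := by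
    intro i h1 h2
    rw [← hoLlen]
    exact List.idxOf_lt_length_iff.mpr ((hmemoL i).mpr ⟨h2, h1⟩)
  -- iot facts for the two parts of D
  have hiotPairs : ∀ i, 1 ≤ i → i ≤ t → ∀ x ∈ (Sl i).biUnion (Pr k),
      iot k s x ∈ Sl i ∧ iot k s x ∉ Uset n s := by
    intro i h1 h2 x hx
    simp only [Finset.mem_biUnion] at hx
    obtain ⟨j, hj, hxj⟩ := hx
    have hjF := hSlmem i h1 h2 j hj
    rw [Finset.mem_sdiff] at hjF
    have : iot k s x = j := iot_eq_of_mem_Pr hk2 hjF.1 hxj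
    rw [this]
    exact ⟨hj, hjF.2⟩
  have hDdisj : ∀ i ∈ Finset.Icc 1 t, ∀ i' ∈ Finset.Icc 1 t, i ≠ i' →
      Disjoint (D i) (D i') := by
    intro i hi i' hi' hne
    rw [Finset.mem_Icc] at hi hi'
    rw [hD]
    simp only [Finset.disjoint_union_left, Finset.disjoint_union_right]
    refine ⟨⟨?_, ?_⟩, ?_, ?_⟩
    · -- pairs vs pairs
      rw [Finset.disjoint_left]
      intro x hx hx'
      have a1 := (hiotPairs i hi.1 hi.2 x hx).1
      have a2 := (hiotPairs i' hi'.1 hi'.2 x hx').1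
      exact Finset.disjoint_left.mp (hSldisj i i' hi.1 hi.2 hi'.1 hi'.2 hne) a1 a2
    · -- block i vs pairs i'
      split_ifs with h
      · rw [Finset.disjoint_left]
        intro x hx hx'
        have a2 := (hiotPairs i' hi'.1 hi'.2 x hx').2
        exact a2 (Blk_iot hk2 h3n (hrhoO i h (Finset.mem_Icc.mpr hi)) hx)
      · exact Finset.disjoint_empty_left _
    · -- pairs i vs block i'
      split_ifs with h'
      · rw [Finset.disjoint_left]
        intro x hx hx'
        have a1 := (hiotPairs i hi.1 hi.2 x hx).2
        exact a1 (Blk_iot hk2 h3n (hrhoO i' h' (Finset.mem_Icc.mpr hi')) hx')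
      · exact Finset.disjoint_empty_right _
    · split_ifs with h h'
      · have m1 := (hmemoL i).mpr ⟨Finset.mem_Icc.mpr hi, h⟩
        have m2 := (hmemoL i').mpr ⟨Finset.mem_Icc.mpr hi', h'⟩
        refine Blk_disj hk2 h3n (hrhoO i h (Finset.mem_Icc.mpr hi))
          (hrhoO i' h' (Finset.mem_Icc.mpr hi')) ?_
        intro hcon
        exact hne ((List.idxOf_inj m1).mp hcon)
      all_goals simp
  have hDcardsum : ∀ i ∈ Finset.Icc 1 t, (D i).card = r i ∧
      (∑ a ∈ D i, a) % (k + 1) = 0 := by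
    intro i hi
    rw [Finset.mem_Icc] at hi
    have hdisj : Disjoint ((Sl i).biUnion (Pr k))
        (if r i % 2 = 1 then Blk k n (oL.idxOf i) else ∅) := by
      split_ifs with h
      · rw [Finset.disjoint_left]
        intro x hx hx'
        exact (hiotPairs i hi.1 hi.2 x hx).2
          (Blk_iot hk2 h3n (hrhoO i h (Finset.mem_Icc.mpr hi)) hx')
      · exact Finset.disjoint_empty_right _
    have hprdisj : Set.PairwiseDisjoint ↑(Sl i) (Pr k) := by
      intro a ha b hb hab
      have j1 := (Finset.mem_sdiff.mp (hSlmem i hi.1 hi.2 a ha)).1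
      have j2 := (Finset.mem_sdiff.mp (hSlmem i hi.1 hi.2 b hb)).1
      exact Pr_disj hk2 j1 j2 hab
    have hpc : ((Sl i).biUnion (Pr k)).card = 2 * qt r i := by
      rw [Finset.card_biUnion]
      · rw [Finset.sum_congr rfl (fun j hj =>
          Pr_card hk2 (Finset.mem_sdiff.mp (hSlmem i hi.1 hi.2 j hj)).1)]
        rw [Finset.sum_const, smul_eq_mul, hSlcard i hi.1 hi.2, mul_comm]
      · intro a ha b hb hab
        exact hprdisj ha hb hab
    have hps : (∑ a ∈ (Sl i).biUnion (Pr k), a) = qt r i * (k+1) := by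
      rw [Finset.sum_biUnion hprdisj]
      rw [Finset.sum_congr rfl (fun j hj =>
        Pr_sum hk2 (Finset.mem_sdiff.mp (hSlmem i hi.1 hi.2 j hj)).1)]
      rw [Finset.sum_const, smul_eq_mul, hSlcard i hi.1 hi.2]
    constructor
    · rw [hD, Finset.card_union_of_disjoint hdisj, hpc]
      have hthis := hrq i (Finset.mem_Icc.mpr hi)
      split_ifs with h
      · rw [if_pos h] at hthis
        rw [Blk_card hk2 h3n (hrhoO i h (Finset.mem_Icc.mpr hi))]
        omega
      · rw [if_neg h] at hthis
        simp only [Finset.card_empty]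
        omega
    · rw [hD, Finset.sum_union hdisj, hps]
      rw [Nat.add_mod, Nat.mul_mod_left]
      split_ifs with h
      · rw [Blk_sum hk2 h3n (hrhoO i h (Finset.mem_Icc.mpr hi))]
        simp
      · simp
  have hDsub : ∀ i ∈ Finset.Icc 1 t, D i ⊆ Finset.Icc 1 k := by
    intro i hi
    rw [Finset.mem_Icc] at hi
    rw [hD]
    apply Finset.union_subset
    · apply Finset.biUnion_subset.mpr
      intro j hj
      exact Pr_sub hk2 (Finset.mem_sdiff.mp (hSlmem i hi.1 hi.2 j hj)).1
    · split_ifs with h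
      · exact Blk_sub hk2 h3n (hrhoO i h (Finset.mem_Icc.mpr hi))
      · simp
  have hcover : ∀ x ∈ Finset.Icc 1 k, ∃ i ∈ Finset.Icc 1 t, x ∈ D i := by
    intro x hx
    have hiom := iot_mem hk2 hx
    by_cases hU : iot k s x ∈ Uset n s
    · simp only [Uset, Finset.mem_biUnion] at hU
      obtain ⟨d, hd, hjd⟩ := hU
      rw [Finset.mem_Icc] at hd
      have hxB := mem_B1B2_of hk2 h3n hd.1 hd.2 hx hjd
      rw [Finset.mem_union] at hxB
      have hn1 : 1 ≤ n := by omega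
      rcases hxB with hxB | hxB
      · -- x ∈ B1 d : block index d-1
        have hρ : d - 1 < oL.length := by omega
        set i₀ := oL[d-1] with hi₀
        have hmem : i₀ ∈ oL := List.getElem_mem hρ
        have hio := (hmemoL i₀).mp hmem
        refine ⟨i₀, hio.1, ?_⟩
        rw [hD]
        apply Finset.mem_union_right
        rw [if_pos hio.2]
        have hidx : oL.idxOf i₀ = d - 1 := by
          rw [hi₀]; exact List.Nodup.idxOf_getElem hoLnd _ _
        rw [hidx]
        unfold Blk
        rw [if_pos (by omega : d - 1 < n)]
        have : d - 1 + 1 = d := by omega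
        rw [this]
        exact hxB
      · have hρ : d - 1 + n < oL.length := by omega
        set i₀ := oL[d-1+n] with hi₀
        have hmem : i₀ ∈ oL := List.getElem_mem hρ
        have hio := (hmemoL i₀).mp hmem
        refine ⟨i₀, hio.1, ?_⟩
        rw [hD]
        apply Finset.mem_union_right
        rw [if_pos hio.2]
        have hidx : oL.idxOf i₀ = d - 1 + n := by
          rw [hi₀]; exact List.Nodup.idxOf_getElem hoLnd _ _
        rw [hidx]
        unfold Blk
        rw [if_neg (by omega : ¬(d - 1 + n < n))]
        have : d - 1 + n + 1 - n = d := by omega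
        rw [this]
        exact hxB
    · -- free index
      have hjF : iot k s x ∈ Finset.Icc 1 s \ Uset n s := Finset.mem_sdiff.mpr ⟨hiom, hU⟩
      have hjL : iot k s x ∈ L := FLst_mem.mpr hjF
      obtain ⟨p, hp, hgp⟩ := List.mem_iff_getElem.mp hjL
      rw [hLlen] at hp
      obtain ⟨i, h1, h2, h3, h4⟩ := exists_slot hp
      refine ⟨i, Finset.mem_Icc.mpr ⟨h1, h2⟩, ?_⟩
      rw [hD]
      apply Finset.mem_union_left
      apply Finset.mem_biUnion.mpr
      refine ⟨iot k s x, ?_, mem_Pr_iot hx⟩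
      rw [hSl]
      simp only [Finset.mem_image, Finset.mem_range]
      refine ⟨p - Qt r i, by omega, ?_⟩
      have : Qt r i + (p - Qt r i) = p := by omega
      rw [this, List.getD_eq_getElem _ _ (by rw [hLlen]; omega), hgp]
  refine ⟨D, hDdisj, ?_, hDcardsum⟩
  apply Finset.Subset.antisymm
  · apply Finset.biUnion_subset.mpr
    exact hDsub
  · intro x hx
    obtain ⟨i, hi, hxi⟩ := hcover x hx
    exact Finset.mem_biUnion.mpr ⟨i, hi, hxi⟩
end
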